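/- arXiv:1207.4039 — 6 statements merged into one kernel-verified Lean document; each statement's English description precedes it below -/
import Mathlib

section
/- Let G be a finite abelian group (written additively), p a prime number, and d a positive integer. Let f : G → ℂ be a function such that every value f(x) is integral over ℤ[1/p] (i.e., for each x there is k ∈ ℕ with p^k · f(x) an algebraic integer), and suppose f satisfies the convolution identity ∑_{y∈G} f(x−y)·f(y) = d·f(x) for all x ∈ G. Then for every x ∈ G with f(x) ≠ 0, every prime divisor l of the order of x satisfies l ≤ d or l = p. -/
private lemma aux_isIntegral_of_pow_eq_one {z : ℂ} {N : ℕ} (hN : N ≠ 0) (h : z ^ N = 1) :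
    IsIntegral ℤ z := by
  refine ⟨Polynomial.X ^ N - Polynomial.C 1, Polynomial.monic_X_pow_sub_C 1 hN, ?_⟩
  simp [h]

private lemma aux_exists_int_of_isIntegral_rat {q : ℚ} (h : IsIntegral ℤ ((q : ℂ))) :
    ∃ m : ℤ, (m : ℚ) = q := by
  have h2 : IsIntegral ℤ q := by
    have he : (algebraMap ℚ ℂ) q = (q : ℂ) := eq_ratCast _ q
    rw [← he] at h
    exact (isIntegral_algebraMap_iff ((algebraMap ℚ ℂ).injective)).mp h
  obtain ⟨m, hm⟩ := IsIntegrallyClosed.isIntegral_iff.mp h2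
  exact ⟨m, by rw [← hm]; simp⟩

/-- If `f : G → ℂ` on a finite abelian group has values integral over `ℤ[1/p]`
and satisfies the convolution identity `f ⋆ f = d • f`, then every point of the
support of `f` has order whose prime divisors are all `≤ d` or equal to `p`. -/
theorem support_of_convolution_idempotent_in_pd_torsion
    (G : Type*) [AddCommGroup G] [Fintype G]
    (p : ℕ) (hp : p.Prime) (d : ℕ) (hd : 0 < d)
    (f : G → ℂ)
    (hint : ∀ x : G, ∃ k : ℕ, IsIntegral ℤ ((p : ℂ) ^ k * f x))
    (hconv : ∀ x : G, (∑ y : G, f (x - y) * f y) = (d : ℂ) * f x) :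
    ∀ x : G, f x ≠ 0 → ∀ l : ℕ, l.Prime → l ∣ addOrderOf x → l ≤ d ∨ l = p := by
  classical
  intro x hfx l hl hldvd
  by_contra hcon
  push_neg at hcon
  obtain ⟨hld, hlp⟩ := hcon

  -- l does not divide d and l does not divide p
  have hlnd : ¬ l ∣ d := fun h => absurd (Nat.le_of_dvd hd h) (not_le.mpr hld)
  have hlnp : ¬ l ∣ p := fun h => hlp ((Nat.prime_dvd_prime_iff_eq hl hp).mp h)
  have hdne : (d : ℂ) ≠ 0 := Nat.cast_ne_zero.mpr hd.ne'
  -- the element z of order l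
  set n := addOrderOf x with hn
  have hnpos : 0 < n := addOrderOf_pos x
  set z : G := (n / l) • x with hz
  have hlz : l • z = 0 := by
    rw [hz, smul_smul, Nat.mul_div_cancel' hldvd]
    exact addOrderOf_nsmul_eq_zero x
  have hzne : z ≠ 0 := by
    intro h0
    have h1 : n ∣ n / l := addOrderOf_dvd_iff_nsmul_eq_zero.mpr (by rw [← hz, h0])
    have h2 : n / l < n := Nat.div_lt_self hnpos hl.one_lt
    have h3 : 0 < n / l := Nat.div_pos (Nat.le_of_dvd hnpos hldvd) hl.pos
    exact absurd (Nat.le_of_dvd h3 h1) (not_le.mpr h2)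
  -- a character not vanishing at z
  obtain ⟨χ₀, hχ₀⟩ : ∃ χ : AddChar G ℂ, χ z ≠ 1 := AddChar.exists_apply_ne_zero.mpr hzne
  -- u = χ₀ z has order exactly l
  set u : ℂ := χ₀ z with hu
  have hul : u ^ l = 1 := by
    rw [hu, ← AddChar.map_nsmul_eq_pow, hlz, AddChar.map_zero_eq_one]
  have huord : orderOf u = l := by
    have h1 : orderOf u ∣ l := orderOf_dvd_of_pow_eq_one hul
    rcases (Nat.Prime.eq_one_or_self_of_dvd hl _ h1) with h | h
    · exact absurd (orderOf_eq_one_iff.mp h) hχ₀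
    · exact h
  -- the order t of χ₀ and its l-part
  set t : ℕ := orderOf χ₀ with ht
  have htpos : 0 < t := orderOf_pos χ₀
  have hlt : l ∣ t := by
    have h1 : u ^ t = 1 := by
      have : (χ₀ ^ t) z = 1 := by rw [ht, pow_orderOf_eq_one]; rfl
      rwa [AddChar.pow_apply] at this
    rw [← huord]
    exact orderOf_dvd_of_pow_eq_one h1
  set M : ℕ := t.factorization l with hM
  have hMpos : 0 < M := hl.factorization_pos_of_dvd htpos.ne' hlt
  set c : ℕ := t / l ^ M with hc
  have hct : l ^ M * c = t := Nat.ordProj_mul_ordCompl_eq_self t l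
  have hlnc : ¬ l ∣ c := Nat.not_dvd_ordCompl hl htpos.ne'
  -- the character ψ of l-power order with ψ x ≠ 1
  set ψ : AddChar G ℂ := χ₀ ^ c with hψ
  have hψpow : ψ ^ (l ^ M) = 1 := by
    rw [hψ, ← pow_mul, mul_comm, hct, ht, pow_orderOf_eq_one]
  have hψval : ∀ y : G, (ψ y) ^ (l ^ M) = 1 := by
    intro y
    have : (ψ ^ (l ^ M)) y = 1 := by rw [hψpow]; rfl
    rwa [AddChar.pow_apply] at this
  have hψz : ψ z ≠ 1 := by
    intro h1
    have : ψ z = u ^ c := by rw [hψ, AddChar.pow_apply]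
    rw [this] at h1
    exact hlnc (huord ▸ orderOf_dvd_of_pow_eq_one h1)
  have hψx : ψ x ≠ 1 := by
    intro h1
    apply hψz
    rw [hz, AddChar.map_nsmul_eq_pow, h1, one_pow]
  -- the Fourier transform
  set Fhat : AddChar G ℂ → ℂ := fun χ => ∑ y : G, f y * χ y with hFhatdef
  -- values of the Fourier transform are 0 or d
  have hFval : ∀ χ : AddChar G ℂ, Fhat χ = 0 ∨ Fhat χ = (d : ℂ) := by
    intro χ
    have hsq : Fhat χ * Fhat χ = (d : ℂ) * Fhat χ := by
      rw [hFhatdef]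
      calc (∑ y : G, f y * χ y) * (∑ v : G, f v * χ v)
          = ∑ v : G, ∑ y : G, (f y * χ y) * (f v * χ v) := by
            rw [Finset.sum_mul_sum]
            exact Finset.sum_comm
        _ = ∑ v : G, ∑ s : G, (f (s - v) * f v) * χ s := by
            refine Finset.sum_congr rfl (fun v _ => ?_)
            refine Fintype.sum_equiv (Equiv.subRight v).symm _ _ (fun s => ?_)
            have h1 : (Equiv.subRight v).symm s = s + v := rfl
            rw [h1]
            have h2 : s + v - v = s := by abel
            rw [h2, AddChar.map_add_eq_mul]
            ring
        _ = ∑ s : G, (∑ v : G, f (s - v) * f v) * χ s := by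
            rw [Finset.sum_comm]
            exact Finset.sum_congr rfl (fun s _ => by rw [Finset.sum_mul])
        _ = ∑ s : G, ((d : ℂ) * f s) * χ s := by
            refine Finset.sum_congr rfl (fun s _ => ?_)
            rw [hconv s]
        _ = (d : ℂ) * ∑ s : G, f s * χ s := by
            rw [Finset.mul_sum]
            exact Finset.sum_congr rfl (fun s _ => by ring)
    have : Fhat χ * (Fhat χ - (d : ℂ)) = 0 := by
      rw [mul_sub, hsq]; ring
    rcases mul_eq_zero.mp this with h | h
    · exact Or.inl h
    · exact Or.inr (sub_eq_zero.mp h)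
  -- a uniform bound for the denominators
  obtain ⟨K, hK⟩ : ∃ K : ℕ, ∀ y : G, IsIntegral ℤ ((p : ℂ) ^ K * f y) := by
    choose k hk using hint
    refine ⟨Finset.univ.sup k, fun y => ?_⟩
    have h1 : (p : ℂ) ^ (Finset.univ.sup k) * f y
        = (p : ℂ) ^ (Finset.univ.sup k - k y) * ((p : ℂ) ^ (k y) * f y) := by
      rw [← mul_assoc, ← pow_add, Nat.sub_add_cancel (Finset.le_sup (Finset.mem_univ y))]
    rw [h1]
    have h2 : IsIntegral ℤ ((p : ℂ) ^ (Finset.univ.sup k - k y)) := by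
      have : IsIntegral ℤ ((p : ℕ) : ℂ) := by
        have : ((p : ℕ) : ℂ) = algebraMap ℤ ℂ (p : ℤ) := by push_cast; rfl
        rw [this]; exact isIntegral_algebraMap
      exact this.pow _
    exact h2.mul (hk y)
  -- character values are algebraic integers
  have hχint : ∀ (χ : AddChar G ℂ) (y : G), IsIntegral ℤ (χ y) := by
    intro χ y
    refine aux_isIntegral_of_pow_eq_one (N := addOrderOf y) (addOrderOf_pos y).ne' ?_
    rw [← AddChar.map_nsmul_eq_pow, addOrderOf_nsmul_eq_zero, AddChar.map_zero_eq_one]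
  -- key step : the Fourier transform is invariant under multiplication by ψ
  have hconst : ∀ χ : AddChar G ℂ, Fhat (χ * ψ) = Fhat χ := by
    intro χ
    set n' : ℕ := l ^ M with hn'
    have hn'pos : 0 < n' := pow_pos hl.pos M
    have hn'two : 2 ≤ n' := by
      calc 2 ≤ l := hl.two_le
        _ = l ^ 1 := (pow_one l).symm
        _ ≤ l ^ M := Nat.pow_le_pow_right hl.pos hMpos
    -- the orbit sum
    set A : ℂ := ∑ j ∈ Finset.range n', Fhat (χ * ψ ^ j) with hA
    set w : ℂ := ∑ y ∈ Finset.univ.filter (fun y : G => ψ y = 1), f y * χ y with hw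
    have hA1 : A = (n' : ℂ) * w := by
      rw [hA, hFhatdef]
      calc ∑ j ∈ Finset.range n', ∑ y : G, f y * (χ * ψ ^ j) y
          = ∑ y : G, ∑ j ∈ Finset.range n', f y * χ y * (ψ y) ^ j := by
            rw [Finset.sum_comm]
            refine Finset.sum_congr rfl (fun y _ => Finset.sum_congr rfl (fun j _ => ?_))
            rw [AddChar.mul_apply, AddChar.pow_apply]
            ring
        _ = ∑ y : G, f y * χ y * (∑ j ∈ Finset.range n', (ψ y) ^ j) := by
            refine Finset.sum_congr rfl (fun y _ => ?_)
            rw [Finset.mul_sum]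
        _ = ∑ y : G, (if ψ y = 1 then (n' : ℂ) * (f y * χ y) else 0) := by
            refine Finset.sum_congr rfl (fun y _ => ?_)
            by_cases hy : ψ y = 1
            · rw [if_pos hy, hy]
              simp [mul_comm]
            · rw [if_neg hy, geom_sum_eq hy, hψval y, sub_self, zero_div, mul_zero]
        _ = (n' : ℂ) * w := by
            rw [Finset.sum_ite, Finset.sum_const_zero, add_zero, hw, Finset.mul_sum]
    -- the orbit count
    set N : ℕ := (Finset.range n' |>.filter (fun j => Fhat (χ * ψ ^ j) = (d : ℂ))).card with hN
    have hA2 : A = (d : ℂ) * N := by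
      rw [hA]
      calc ∑ j ∈ Finset.range n', Fhat (χ * ψ ^ j)
          = ∑ j ∈ Finset.range n', (if Fhat (χ * ψ ^ j) = (d : ℂ) then (d : ℂ) else 0) := by
            refine Finset.sum_congr rfl (fun j _ => ?_)
            rcases hFval (χ * ψ ^ j) with h | h
            · rw [h, if_neg (Ne.symm hdne)]
            · rw [h, if_pos rfl]
        _ = (d : ℂ) * N := by
            rw [Finset.sum_ite, Finset.sum_const_zero, add_zero, Finset.sum_const, hN]
            simp [mul_comm]
    -- integrality gives the divisibility
    have hwint : IsIntegral ℤ ((p : ℂ) ^ K * w) := by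
      rw [hw, Finset.mul_sum]
      refine IsIntegral.sum _ (fun y _ => ?_)
      have : (p : ℂ) ^ K * (f y * χ y) = ((p : ℂ) ^ K * f y) * χ y := by ring
      rw [this]
      exact (hK y).mul (hχint χ y)
    have hq : ((((p ^ K * d * N : ℕ) : ℚ) / ((n' : ℕ) : ℚ) : ℚ) : ℂ) = (p : ℂ) ^ K * w := by
      have hwval : w = (d : ℂ) * N / n' := by
        have h1 : ((n' : ℕ) : ℂ) ≠ 0 := Nat.cast_ne_zero.mpr hn'pos.ne'
        rw [eq_div_iff h1, mul_comm, ← hA1]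
        exact hA2
      rw [hwval]
      push_cast
      ring
    have hdvd : (n' : ℕ) ∣ p ^ K * d * N := by
      obtain ⟨m, hm⟩ := aux_exists_int_of_isIntegral_rat (q := ((p ^ K * d * N : ℕ) : ℚ) / n')
        (by rw [hq]; exact hwint)
      have hne : ((n' : ℕ) : ℚ) ≠ 0 := Nat.cast_ne_zero.mpr hn'pos.ne'
      have hmz : (m : ℚ) * n' = ((p ^ K * d * N : ℕ) : ℚ) := by
        rw [hm, div_mul_cancel₀ _ hne]
      have hmz' : m * (n' : ℤ) = ((p ^ K * d * N : ℕ) : ℤ) := by exact_mod_cast hmz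
      have : ((n' : ℕ) : ℤ) ∣ ((p ^ K * d * N : ℕ) : ℤ) := ⟨m, by rw [← hmz']; ring⟩
      exact_mod_cast this
    have hcop : Nat.Coprime (l ^ M) (p ^ K * d) := by
      refine Nat.Coprime.pow_left M ?_
      refine Nat.Coprime.mul_right ?_ ((Nat.Prime.coprime_iff_not_dvd hl).mpr hlnd)
      exact Nat.Coprime.pow_right K ((Nat.Prime.coprime_iff_not_dvd hl).mpr hlnp)
    have hNdvd : n' ∣ N := Nat.Coprime.dvd_of_dvd_mul_left hcop hdvd
    -- N = 0 or N = n', and in both cases the values at j = 0 and j = 1 agree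
    have hNle : N ≤ n' := le_trans (Finset.card_filter_le _ _) (by rw [Finset.card_range])
    have h01 : ∀ j ∈ Finset.range n', Fhat (χ * ψ ^ j) = Fhat (χ * ψ ^ 0) := by
      intro j hj
      rcases eq_or_lt_of_le hNle with hEq | hLt
      · -- N = n' : every j is in the filter, all values are d
        have hfull : (Finset.range n' |>.filter (fun j => Fhat (χ * ψ ^ j) = (d : ℂ)))
            = Finset.range n' := Finset.eq_of_subset_of_card_le (Finset.filter_subset _ _)
          (by rw [Finset.card_range, ← hN, hEq])
        have h1 : Fhat (χ * ψ ^ j) = (d : ℂ) := by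
          have := hfull ▸ hj
          exact (Finset.mem_filter.mp this).2
        have h0 : Fhat (χ * ψ ^ 0) = (d : ℂ) := by
          have h0m : (0 : ℕ) ∈ Finset.range n' := Finset.mem_range.mpr hn'pos
          have := hfull ▸ h0m
          exact (Finset.mem_filter.mp this).2
        rw [h1, h0]
      · -- N < n' : N = 0 since n' | N, so no value is d, all values are 0
        have hN0 : (Finset.range n' |>.filter (fun j => Fhat (χ * ψ ^ j) = (d : ℂ))) = ∅ :=
          Finset.card_eq_zero.mp (by rw [← hN]; exact Nat.eq_zero_of_dvd_of_lt hNdvd hLt)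
        have hnone : ∀ i ∈ Finset.range n', Fhat (χ * ψ ^ i) ≠ (d : ℂ) := by
          intro i hi hcontra
          have : i ∈ (Finset.range n' |>.filter (fun j => Fhat (χ * ψ ^ j) = (d : ℂ))) :=
            Finset.mem_filter.mpr ⟨hi, hcontra⟩
          rw [hN0] at this
          exact absurd this (Finset.notMem_empty i)
        have h1 : Fhat (χ * ψ ^ j) = 0 :=
          (hFval _).resolve_right (hnone j hj)
        have h0 : Fhat (χ * ψ ^ 0) = 0 :=
          (hFval _).resolve_right (hnone 0 (Finset.mem_range.mpr hn'pos))
        rw [h1, h0]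
    have := h01 1 (Finset.mem_range.mpr (lt_of_lt_of_le one_lt_two hn'two))
    rwa [pow_one, pow_zero, mul_one] at this
  -- Fourier inversion : card * f x
  set Sg : ℂ := ∑ χ : AddChar G ℂ, Fhat χ * χ (-x) with hSg
  have hcard : Sg = (Fintype.card (AddChar G ℂ) : ℂ) * f x := by
    rw [hSg, hFhatdef]
    calc ∑ χ : AddChar G ℂ, (∑ y : G, f y * χ y) * χ (-x)
        = ∑ χ : AddChar G ℂ, ∑ y : G, f y * χ (y - x) := by
          refine Finset.sum_congr rfl (fun χ _ => ?_)
          rw [Finset.sum_mul]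
          refine Finset.sum_congr rfl (fun y _ => ?_)
          rw [mul_assoc, ← AddChar.map_add_eq_mul, ← sub_eq_add_neg]
      _ = ∑ y : G, f y * (∑ χ : AddChar G ℂ, χ (y - x)) := by
          rw [Finset.sum_comm]
          exact Finset.sum_congr rfl (fun y _ => by rw [Finset.mul_sum])
      _ = (Fintype.card (AddChar G ℂ) : ℂ) * f x := by
          rw [Finset.sum_eq_single x]
          · simp [mul_comm]
          · intro y _ hy
            rw [AddChar.sum_apply_eq_zero_iff_ne_zero.mpr (sub_ne_zero.mpr hy), mul_zero]
          · intro h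
            exact absurd (Finset.mem_univ x) h
  have hshift : Sg = ψ (-x) * Sg := by
    rw [hSg]
    calc ∑ χ : AddChar G ℂ, Fhat χ * χ (-x)
        = ∑ χ : AddChar G ℂ, Fhat (χ * ψ) * (χ * ψ) (-x) := by
          refine Fintype.sum_equiv (Equiv.mulRight ψ⁻¹) _ _ (fun χ' => ?_)
          rw [Equiv.coe_mulRight, inv_mul_cancel_right]
      _ = ψ (-x) * ∑ χ : AddChar G ℂ, Fhat χ * χ (-x) := by
          rw [Finset.mul_sum]
          refine Finset.sum_congr rfl (fun χ _ => ?_)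
          rw [hconst χ, AddChar.mul_apply]
          ring
  have hψnegx : ψ (-x) ≠ 1 := by
    intro h1
    apply hψx
    have h2 : ψ (-x) * ψ x = 1 := by
      rw [← AddChar.map_add_eq_mul, neg_add_cancel, AddChar.map_zero_eq_one]
    rw [h1, one_mul] at h2
    exact h2
  have hSg0 : Sg = 0 := by
    have hfac : (1 - ψ (-x)) * Sg = 0 := by
      rw [sub_mul, one_mul, ← hshift, sub_self]
    rcases mul_eq_zero.mp hfac with h | h
    · exact absurd (sub_eq_zero.mp h).symm hψnegx
    · exact h
  rw [hSg0] at hcard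
  have hcardne : (Fintype.card (AddChar G ℂ) : ℂ) ≠ 0 :=
    Nat.cast_ne_zero.mpr Fintype.card_ne_zero
  exact hfx (by
    rcases mul_eq_zero.mp hcard.symm with h | h
    · exact absurd h hcardne
    · exact h)
end

section
/- Let R be a commutative ring, 𝔭 ⊂ R a prime ideal containing a prime number l (i.e., l·1_R ∈ 𝔭), G a finite abelian group (written additively), f : G → R a function, and χ, χ' : G → Rˣ two characters such that the character χ'·χ⁻¹ has l-power order (equivalently, (χ'·χ⁻¹)(x)^{l^r} = 1 for all x ∈ G, for some r). Then ∑_{x∈G} f(x)·χ'(−x) ≡ ∑_{x∈G} f(x)·χ(−x) modulo 𝔭. -/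
/-- If `u^(l^r) = 1` in `R` then `u - 1` lies in any prime ideal containing `l`. -/
lemma unit_sub_one_mem_of_lpow (R : Type*) [CommRing R] (𝔭 : Ideal R) (h𝔭 : 𝔭.IsPrime)
    (l : ℕ) (hl : l.Prime) (hl𝔭 : (l : R) ∈ 𝔭) (r : ℕ) (u : R) (hu : u ^ l ^ r = 1) :
    u - 1 ∈ 𝔭 := by
  have hpow : (u - 1) ^ l ^ r ∈ 𝔭 := by
    obtain ⟨c, hc⟩ := exists_add_pow_prime_pow_eq hl u (-1) r
    have : (u - 1) ^ l ^ r = 1 + (-1) ^ l ^ r + l * (u * -1 * c) := by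
      rw [sub_eq_add_neg, hc, hu]; ring
    rw [this]
    refine Ideal.add_mem _ ?_ (Ideal.mul_mem_right _ _ hl𝔭)
    rcases Nat.even_or_odd (l ^ r) with he | ho
    · have h2 : l = 2 := (Nat.Prime.even_iff hl).mp (Nat.even_pow.mp he).1
      rw [he.neg_one_pow]
      have : (1 : R) + 1 = (l : R) := by rw [h2]; norm_num
      rw [this]; exact hl𝔭
    · rw [ho.neg_one_pow]; simp
  exact (h𝔭.pow_mem_iff_mem _ (pow_pos hl.pos r)).mp hpow

/-- If two characters `χ', χ` of a finite abelian group `G` with values in `Rˣ`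
differ by a character of `l`-power order, then the Fourier coefficients
`∑ x, f x * χ' (-x)` and `∑ x, f x * χ (-x)` of any `f : G → R` are congruent
modulo any prime ideal `𝔭` containing the prime `l`. -/
theorem fourier_coeff_congruent_mod_prime_of_lpow_twist
    (R : Type*) [CommRing R] (𝔭 : Ideal R) (h𝔭 : 𝔭.IsPrime)
    (l : ℕ) (hl : l.Prime) (hl𝔭 : (l : R) ∈ 𝔭)
    (G : Type*) [AddCommGroup G] [Fintype G]
    (f : G → R) (χ χ' : AddChar G Rˣ)
    (htwist : ∃ r : ℕ, ∀ x : G, (χ' x * (χ x)⁻¹) ^ l ^ r = 1) :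
    (∑ x : G, f x * (χ' (-x) : R)) - (∑ x : G, f x * (χ (-x) : R)) ∈ 𝔭 := by
  obtain ⟨r, hr⟩ := htwist
  rw [← Finset.sum_sub_distrib]
  refine Ideal.sum_mem _ fun x _ => ?_
  have key : ((χ' (-x) : R)) - (χ (-x) : R) ∈ 𝔭 := by
    have h1 : ((χ' (-x) * (χ (-x))⁻¹ : Rˣ) : R) ^ l ^ r = 1 := by
      rw [← Units.val_pow_eq_pow_val, hr (-x)]; rfl
    have h2 := unit_sub_one_mem_of_lpow R 𝔭 h𝔭 l hl hl𝔭 r _ h1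
    have : (χ' (-x) : R) - (χ (-x) : R)
        = (((χ' (-x) * (χ (-x))⁻¹ : Rˣ) : R) - 1) * (χ (-x) : R) := by
      push_cast
      rw [sub_mul, mul_assoc, Units.inv_mul, mul_one, one_mul]
    rw [this]
    exact Ideal.mul_mem_right _ _ h2
  have : f x * (χ' (-x) : R) - f x * (χ (-x) : R) = f x * ((χ' (-x) : R) - (χ (-x) : R)) := by
    ring
  rw [this]
  exact Ideal.mul_mem_left _ _ key
end

section
/- Let a ≥ 1 be an integer and let p, q ∈ ℚ[x,x⁻¹] be Laurent polynomials such that every monomial of p has degree in the interval [1−a, a−1], the value of q at x = −1 is nonzero, and the product p·q is divisible by (x+1)^{2a} in ℚ[x,x⁻¹]. Then p = 0. -/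
open LaurentPolynomial

open Polynomial

noncomputable def eps : LaurentPolynomial ℚ →ₐ[ℚ] ℚ :=
  AddMonoidAlgebra.lift ℚ ℚ ℤ ((Units.coeHom ℚ).comp (zpowersHom ℚˣ (-1)))

lemma eps_apply (f : LaurentPolynomial ℚ) :
    eps f = Finsupp.sum f.coeff fun n c => c * (-1 : ℚ) ^ n := by
  rw [eps, AddMonoidAlgebra.lift_apply]
  refine Finsupp.sum_congr fun n _ => ?_
  simp [smul_eq_mul, zpowersHom_apply]

lemma eps_T (n : ℤ) : eps (T n) = (-1 : ℚ) ^ n := by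
  rw [eps_apply, T, AddMonoidAlgebra.coeff_single, Finsupp.sum_single_index] <;> simp

lemma eps_toLaurent (P : ℚ[X]) : eps (Polynomial.toLaurent P) = P.eval (-1) := by
  have h : (eps.comp Polynomial.toLaurentAlg : ℚ[X] →ₐ[ℚ] ℚ) = Polynomial.aeval (-1) := by
    apply Polynomial.algHom_ext
    simp only [AlgHom.comp_apply, Polynomial.toLaurentAlg_apply, Polynomial.toLaurent_X,
      Polynomial.aeval_X]
    rw [eps_T]; norm_num
  have h2 := congrArg (fun F => F P) h
  simpa [Polynomial.toLaurentAlg_apply] using h2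

lemma mul_T_apply (f : LaurentPolynomial ℚ) (k y : ℤ) :
    (f * T k : LaurentPolynomial ℚ).coeff y = f.coeff (y - k) := by
  have h := AddMonoidAlgebra.coeff_mul_single_apply f (1 : ℚ) k y
  rw [mul_one] at h
  exact h

lemma tl_coeff (P : ℚ[X]) (d : ℕ) : (Polynomial.toLaurent P).coeff (d : ℤ) = P.coeff d := by
  rw [Polynomial.toLaurent_apply]
  exact Finsupp.mapDomain_apply Nat.cast_injective _ _

lemma exists_toLaurent_eq (f : LaurentPolynomial ℚ) (h : ∀ m : ℤ, m < 0 → f.coeff m = 0) :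
    ∃ P : ℚ[X], Polynomial.toLaurent P = f := by
  obtain ⟨n, P, hP⟩ := exists_T_pow f
  have hdvd : (X : ℚ[X]) ^ n ∣ P := by
    rw [Polynomial.X_pow_dvd_iff]
    intro d hd
    have h1 := tl_coeff P d
    rw [hP, mul_T_apply] at h1
    rw [← h1, h _ (by omega)]
  obtain ⟨P', rfl⟩ := hdvd
  refine ⟨P', ?_⟩
  have h1 : Polynomial.toLaurent P' * T (n : ℤ) = f * T (n : ℤ) := by
    rw [← hP, map_mul, Polynomial.toLaurent_X_pow]; ring
  have h2 := congrArg (· * T (-(n : ℤ))) h1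
  simpa [mul_T_assoc] using h2

/-- If a Laurent polynomial `p` over `ℚ` has all monomial degrees in `[1-a, a-1]`,
`q` has nonzero value at `x = -1`, and `(x+1)^{2a}` divides `p * q`, then `p = 0`. -/
theorem laurent_eq_zero_of_mul_dvd_by_pow
    (a : ℕ) (ha : 1 ≤ a) (p q : LaurentPolynomial ℚ)
    (hsupp : ∀ n : ℤ, p.coeff n ≠ 0 → 1 - (a : ℤ) ≤ n ∧ n ≤ (a : ℤ) - 1)
    (hq : (Finsupp.sum q.coeff fun n c => c * (-1 : ℚ) ^ n) ≠ 0)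
    (hdvd : ((T 1 : LaurentPolynomial ℚ) + 1) ^ (2 * a) ∣ p * q) :
    p = 0 := by
  obtain ⟨P, hP⟩ := exists_toLaurent_eq (p * T ((a : ℤ) - 1)) (by
    intro m hm
    rw [mul_T_apply]
    by_contra hne
    have := (hsupp _ hne).1
    omega)
  obtain ⟨n, Q, hQ⟩ := exists_T_pow q
  obtain ⟨c, hc⟩ := hdvd
  obtain ⟨m, Cc, hCc⟩ := exists_T_pow c
  have hQeval : Q.eval (-1) ≠ 0 := by
    have h2 : Q.eval (-1) = (Finsupp.sum q.coeff fun n c => c * (-1 : ℚ) ^ n) * (-1 : ℚ) ^ (n : ℤ) := by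
      rw [← eps_toLaurent, hQ, map_mul, eps_T, eps_apply]
    rw [h2]
    exact mul_ne_zero hq (zpow_ne_zero _ (by norm_num))
  have hcast : ((a - 1 + n : ℕ) : ℤ) = (a : ℤ) - 1 + n := by omega
  have eq1 : P * Q * X ^ m = (X + 1) ^ (2 * a) * Cc * X ^ (a - 1 + n) := by
    apply Polynomial.toLaurent_injective
    simp only [map_mul, map_pow, map_add, map_one, hP, hQ, hCc, Polynomial.toLaurent_X_pow,
      Polynomial.toLaurent_X, hcast, T_pow, one_mul, mul_one]
    rw [T_add]
    linear_combination (T ((a : ℤ) - 1) * T (n : ℤ) * T (m : ℤ)) * hc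
  have hP0 : P = 0 := by
    by_contra h0
    have hx1 : (X : ℚ[X]) - Polynomial.C (-1) = X + 1 := by rw [map_neg, map_one, sub_neg_eq_add]
    have hpr : Prime ((X : ℚ[X]) + 1) := hx1 ▸ Polynomial.prime_X_sub_C (-1 : ℚ)
    have hnd : ¬ ((X : ℚ[X]) + 1) ∣ Q * X ^ m := by
      rw [← hx1, Polynomial.dvd_iff_isRoot]
      simp only [Polynomial.IsRoot, Polynomial.eval_mul, Polynomial.eval_pow, Polynomial.eval_X]
      intro h
      rcases mul_eq_zero.mp h with h | h
      · exact hQeval h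
      · exact (pow_ne_zero m (by norm_num : (-1 : ℚ) ≠ 0)) h
    have hd2 : ((X : ℚ[X]) + 1) ^ (2 * a) ∣ P * (Q * X ^ m) :=
      ⟨Cc * X ^ (a - 1 + n), by linear_combination eq1⟩
    have h1 : ((X : ℚ[X]) + 1) ^ (2 * a) ∣ P := hpr.pow_dvd_of_dvd_mul_right _ hnd hd2
    have hdeg : P.natDegree ≤ 2 * a - 2 := by
      rw [Polynomial.natDegree_le_iff_coeff_eq_zero]
      intro N hN
      rw [← tl_coeff, hP, mul_T_apply]
      by_contra hne
      have := (hsupp _ hne).2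
      omega
    have hle := Polynomial.natDegree_le_of_dvd h1 h0
    have hXC : (X + 1 : ℚ[X]) = X + Polynomial.C 1 := by rw [map_one]
    rw [Polynomial.natDegree_pow, hXC, Polynomial.natDegree_X_add_C] at hle
    omega
  have h3 := congrArg (· * T (1 - (a : ℤ))) hP.symm
  simpa [hP0, mul_T_assoc] using h3
end

section
/- Let Γ be a linearly ordered abelian group (a linearly ordered set with a compatible abelian group structure). Let A, B, C be finite multisets of elements of Γ with C nonempty. If the multiset {a + c : a ∈ A, c ∈ C} (counted with multiplicities) equals the multiset {b + c : b ∈ B, c ∈ C}, then A = B. -/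
private lemma multiset_exists_max {Γ : Type*} [LinearOrder Γ] (A : Multiset Γ) (hA : A ≠ 0) :
    ∃ m ∈ A, ∀ x ∈ A, x ≤ m := by
  classical
  have hne : A.toFinset.Nonempty := by
    simpa [Multiset.toFinset_nonempty] using hA
  refine ⟨A.toFinset.max' hne, ?_, fun x hx => ?_⟩
  · simpa using A.toFinset.max'_mem hne
  · exact A.toFinset.le_max' x (by simpa using hx)

/-- Cancellation of sum multisets in a linearly ordered abelian group: if
`A + C = B + C` as multisets (elementwise sums with multiplicity) and `C` is
nonempty, then `A = B`. -/
theorem multiset_add_cancel_of_sum_multiset_eq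
    (Γ : Type*) [AddCommGroup Γ] [LinearOrder Γ] [IsOrderedAddMonoid Γ]
    (A B C : Multiset Γ) (hC : C ≠ 0)
    (h : (A.bind fun a => C.map fun c => a + c) = (B.bind fun b => C.map fun c => b + c)) :
    A = B := by
  classical
  induction A using Multiset.strongInductionOn generalizing B with
  | ih A IH =>
  -- cardinalities are equal
  have hcard : Multiset.card A = Multiset.card B := by
    have := congrArg Multiset.card h
    simp [Multiset.card_bind, Multiset.sum_replicate, Multiset.map_const] at this
    tauto
  rcases eq_or_ne A 0 with rfl | hA
  · symm
    simpa using hcard.symm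
  have hB : B ≠ 0 := by
    intro hB0
    rw [hB0] at hcard
    simp at hcard
    exact hA hcard
  obtain ⟨a, haA, hamax⟩ := multiset_exists_max A hA
  obtain ⟨b, hbB, hbmax⟩ := multiset_exists_max B hB
  obtain ⟨c, hcC, hcmax⟩ := multiset_exists_max C hC
  -- show a = b
  have hab : a = b := by
    have h1 : a + c ∈ B.bind fun b => C.map fun c => b + c := by
      rw [← h]
      exact Multiset.mem_bind.mpr ⟨a, haA, Multiset.mem_map.mpr ⟨c, hcC, rfl⟩⟩
    have h2 : b + c ∈ A.bind fun a => C.map fun c => a + c := by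
      rw [h]
      exact Multiset.mem_bind.mpr ⟨b, hbB, Multiset.mem_map.mpr ⟨c, hcC, rfl⟩⟩
    obtain ⟨b', hb', hb'e⟩ := Multiset.mem_bind.mp h1
    obtain ⟨c1, hc1, hc1e⟩ := Multiset.mem_map.mp hb'e
    obtain ⟨a', ha', ha'e⟩ := Multiset.mem_bind.mp h2
    obtain ⟨c2, hc2, hc2e⟩ := Multiset.mem_map.mp ha'e
    have hle1 : a + c ≤ b + c := by
      rw [← hc1e]
      exact add_le_add (hbmax b' hb') (hcmax c1 hc1)
    have hle2 : b + c ≤ a + c := by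
      rw [← hc2e]
      exact add_le_add (hamax a' ha') (hcmax c2 hc2)
    exact add_right_cancel (le_antisymm hle1 hle2)
  subst hab
  have hAe : A = a ::ₘ A.erase a := (Multiset.cons_erase haA).symm
  have hBe : B = a ::ₘ B.erase a := (Multiset.cons_erase hbB).symm
  rw [hAe, hBe, Multiset.cons_bind, Multiset.cons_bind] at h
  have h' : ((A.erase a).bind fun x => C.map fun c => x + c)
      = ((B.erase a).bind fun x => C.map fun c => x + c) :=
    add_left_cancel h
  have := IH (A.erase a) (Multiset.erase_lt.mpr haA) (B.erase a) h'
  rw [hAe, hBe, this]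
end

section
/- Let k be an algebraically closed field, G a group, and N ◁ G a normal subgroup with G/N finite cyclic. Let V be a finite-dimensional k-vector space and ρ : N → GL(V) an irreducible representation such that for every g ∈ G the conjugate representation n ↦ ρ(g·n·g⁻¹) is isomorphic to ρ. Then ρ extends to a representation ρ' : G → GL(V) with ρ'|_N = ρ. -/
/-- Conjugation of an element of a normal subgroup. -/
private def conjN {G : Type*} [Group G] (N : Subgroup G) (hN : N.Normal) (x : G) (n : N) : N :=
  ⟨x * (n : G) * x⁻¹, hN.conj_mem (n : G) n.2 x⟩

private lemma conjN_coe {G : Type*} [Group G] (N : Subgroup G) (hN : N.Normal) (x : G) (n : N) :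
    (conjN N hN x n : G) = x * (n : G) * x⁻¹ := rfl

private lemma conjN_mul {G : Type*} [Group G] (N : Subgroup G) (hN : N.Normal) (x y : G) (n : N) :
    conjN N hN (x * y) n = conjN N hN x (conjN N hN y n) := by
  apply Subtype.ext
  simp only [conjN_coe, mul_inv_rev]
  group

private lemma conjN_one {G : Type*} [Group G] (N : Subgroup G) (hN : N.Normal) (n : N) :
    conjN N hN 1 n = n := by
  apply Subtype.ext
  simp [conjN_coe]

private lemma conjN_inv_conj {G : Type*} [Group G] (N : Subgroup G) (hN : N.Normal) (x : G)
    (n : N) : conjN N hN x⁻¹ (conjN N hN x n) = n := by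
  rw [← conjN_mul, inv_mul_cancel, conjN_one]

private lemma conjN_conj_inv {G : Type*} [Group G] (N : Subgroup G) (hN : N.Normal) (x : G)
    (n : N) : conjN N hN x (conjN N hN x⁻¹ n) = n := by
  rw [← conjN_mul, mul_inv_cancel, conjN_one]

private lemma intertwine_zpow {G U : Type*} [Group G] [Group U] {N : Subgroup G}
    (hN : N.Normal) (ρ : N →* U) (g : G) (T : U)
    (base : ∀ n : N, ρ n * T = T * ρ (conjN N hN g⁻¹ n)) :
    ∀ (j : ℤ) (n : N), ρ n * T ^ j = T ^ j * ρ (conjN N hN (g ^ j)⁻¹ n) := by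
  have base' : ∀ n : N, ρ n * T⁻¹ = T⁻¹ * ρ (conjN N hN g n) := by
    intro n
    have h := base (conjN N hN g n)
    rw [conjN_inv_conj] at h
    have h2 := congrArg (fun u => T⁻¹ * u * T⁻¹) h
    simp only [mul_assoc, inv_mul_cancel_left, mul_inv_cancel, mul_one] at h2
    exact h2.symm
  intro j
  induction j using Int.induction_on with
  | zero => intro n; simp [conjN_one]
  | succ i ih =>
      intro n
      have h1 : T ^ ((i : ℤ) + 1) = T ^ (i : ℤ) * T := zpow_add_one T i
      rw [h1, ← mul_assoc, ih, mul_assoc, base, ← mul_assoc, ← conjN_mul]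
      congr 2
      rw [← mul_inv_rev, ← zpow_add_one]
  | pred i ih =>
      intro n
      have h1 : T ^ ((-i : ℤ) - 1) = T ^ (-i : ℤ) * T⁻¹ := by
        rw [zpow_sub_one]
      rw [h1, ← mul_assoc, ih, mul_assoc, base', ← mul_assoc, ← conjN_mul]
      congr 3
      group

/-- An irreducible representation of a normal subgroup `N ◁ G` with finite cyclic
quotient, over an algebraically closed field, which is isomorphic to all its
`G`-conjugates, extends to a representation of `G`. -/
theorem extend_irreducible_rep_of_cyclic_quotient
    (k : Type*) [Field k] [IsAlgClosed k]
    (G : Type*) [Group G] (N : Subgroup G) (hN : N.Normal)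
    [Finite (G ⧸ N)] [IsCyclic (G ⧸ N)]
    (V : Type*) [AddCommGroup V] [Module k V] [FiniteDimensional k V]
    (ρ : N →* LinearMap.GeneralLinearGroup k V)
    (hirr : ∀ W : Submodule k V,
      (∀ n : N, ∀ v ∈ W, (ρ n : V →ₗ[k] V) v ∈ W) → W = ⊥ ∨ W = ⊤)
    (hconj : ∀ g : G, ∃ T : V ≃ₗ[k] V, ∀ (n : N) (v : V),
      T ((ρ n : V →ₗ[k] V) v) =
        (ρ ⟨g * (n : G) * g⁻¹, hN.conj_mem (n : G) n.2 g⟩ : V →ₗ[k] V) (T v)) :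
    ∃ ρ' : G →* LinearMap.GeneralLinearGroup k V, ∀ n : N, ρ' (n : G) = ρ n := by
  classical
  rcases subsingleton_or_nontrivial V with hV | hV
  · refine ⟨1, fun n => Units.ext (LinearMap.ext fun v => Subsingleton.elim _ _)⟩
  -- Set-up: a generator of the cyclic quotient and a lift
  obtain ⟨q, hq⟩ := IsCyclic.exists_generator (α := G ⧸ N)
  obtain ⟨g, hg⟩ := QuotientGroup.mk_surjective q
  set m := Nat.card (G ⧸ N) with hm
  have hm0 : 0 < m := Nat.card_pos
  have horder : orderOf q = m := orderOf_eq_card_of_forall_mem_zpowers hq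
  have hgmN : g ^ m ∈ N := by
    rw [← QuotientGroup.eq_one_iff]
    have : ((g ^ m : G) : G ⧸ N) = q ^ m := by
      rw [← hg]; exact QuotientGroup.mk_pow (N := N) g m
    rw [this, ← horder, pow_orderOf_eq_one]
  set gm : N := ⟨g ^ m, hgmN⟩ with hgm
  -- the intertwiner for g, as a unit
  obtain ⟨T₀e, hT₀e⟩ := hconj g
  set T₀ : LinearMap.GeneralLinearGroup k V :=
    LinearMap.GeneralLinearGroup.ofLinearEquiv T₀e with hT₀
  have hbase₀' : ∀ n : N, T₀ * ρ n = ρ (conjN N hN g n) * T₀ := by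
    intro n
    apply Units.ext
    apply LinearMap.ext
    intro v
    exact hT₀e n v
  have hbase₀ : ∀ n : N, ρ n * T₀ = T₀ * ρ (conjN N hN g⁻¹ n) := by
    intro n
    have h := hbase₀' (conjN N hN g⁻¹ n)
    rw [conjN_conj_inv] at h
    exact h.symm
  have key₀ := intertwine_zpow hN ρ g T₀ hbase₀
  -- Schur: `ρ(g^m)⁻¹ * T₀^m` is a scalar μ
  set S : LinearMap.GeneralLinearGroup k V := (ρ gm)⁻¹ * T₀ ^ m with hS
  have hTm : ∀ n : N, T₀ ^ m * ρ n = ρ (conjN N hN (g ^ m) n) * T₀ ^ m := by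
    intro n
    have h := key₀ (m : ℤ) (conjN N hN (g ^ m) n)
    simp only [zpow_natCast] at h
    have harg : conjN N hN ((g ^ (m : ℕ)))⁻¹ (conjN N hN (g ^ (m : ℕ)) n) = n :=
      conjN_inv_conj N hN _ n
    rw [harg] at h
    exact h.symm
  have hScomm : ∀ n : N, S * ρ n = ρ n * S := by
    intro n
    rw [hS, mul_assoc, hTm n, ← mul_assoc, ← map_inv, ← map_mul]
    have : (gm⁻¹ * conjN N hN (g ^ m) n : N) = n * gm⁻¹ := by
      apply Subtype.ext
      simp only [Subgroup.coe_mul, conjN_coe, InvMemClass.coe_inv, hgm]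
      group
    rw [this, map_mul, map_inv, mul_assoc]
  have hcommval : ∀ n : N, ∀ v : V, (S : V →ₗ[k] V) ((ρ n : V →ₗ[k] V) v)
      = (ρ n : V →ₗ[k] V) ((S : V →ₗ[k] V) v) := by
    intro n v
    have := congrArg (fun u : LinearMap.GeneralLinearGroup k V => (u : V →ₗ[k] V) v) (hScomm n)
    simpa using this
  obtain ⟨μ, hμ⟩ := Module.End.exists_eigenvalue (K := k) (V := V) (S : V →ₗ[k] V)
  have heig : ∀ v : V, (S : V →ₗ[k] V) v = μ • v := by
    have hstab : ∀ n : N, ∀ v ∈ Module.End.eigenspace (S : V →ₗ[k] V) μ,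
        (ρ n : V →ₗ[k] V) v ∈ Module.End.eigenspace (S : V →ₗ[k] V) μ := by
      intro n v hv
      rw [Module.End.mem_eigenspace_iff] at hv ⊢
      rw [hcommval n v, hv]
      exact map_smul _ _ _
    have hinv : Module.End.eigenspace (S : V →ₗ[k] V) μ = ⊤ := by
      rcases hirr (Module.End.eigenspace (S : V →ₗ[k] V) μ) hstab with h | h
      · exact absurd h hμ
      · exact h
    intro v
    have : v ∈ Module.End.eigenspace (S : V →ₗ[k] V) μ := hinv ▸ Submodule.mem_top
    exact Module.End.mem_eigenspace_iff.mp this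
  have hμ0 : μ ≠ 0 := by
    obtain ⟨v, hv⟩ := hμ.exists_hasEigenvector
    intro h0
    apply hv.2
    have h1 : (S : V →ₗ[k] V) v = 0 := by rw [heig v, h0, zero_smul]
    have h2 := congrArg (fun f : V →ₗ[k] V => f v) S.inv_val
    simp only [Module.End.mul_apply, Module.End.one_apply] at h2
    rw [h1, map_zero] at h2
    exact h2.symm
  -- extract an m-th root to normalize the intertwiner
  obtain ⟨l, hl⟩ := IsAlgClosed.exists_pow_nat_eq (k := k) μ⁻¹ hm0
  have hl0 : l ≠ 0 := by
    intro h
    rw [h, zero_pow hm0.ne'] at hl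
    exact hμ0 (inv_eq_zero.mp hl.symm)
  have hsval : (l • (1 : V →ₗ[k] V)) * (l⁻¹ • 1) = 1 := by
    rw [smul_mul_assoc, one_mul, smul_smul, mul_inv_cancel₀ hl0, one_smul]
  have hsval' : (l⁻¹ • (1 : V →ₗ[k] V)) * (l • 1) = 1 := by
    rw [smul_mul_assoc, one_mul, smul_smul, inv_mul_cancel₀ hl0, one_smul]
  set s : LinearMap.GeneralLinearGroup k V := ⟨l • 1, l⁻¹ • 1, hsval, hsval'⟩ with hsdef
  have hscentral : ∀ u : LinearMap.GeneralLinearGroup k V, s * u = u * s := by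
    intro u
    apply Units.ext
    show (l • (1 : V →ₗ[k] V)) * (u : V →ₗ[k] V) = (u : V →ₗ[k] V) * (l • 1)
    rw [smul_mul_assoc, one_mul, mul_smul_comm, mul_one]
  set T : LinearMap.GeneralLinearGroup k V := s * T₀ with hT
  have hbase : ∀ n : N, ρ n * T = T * ρ (conjN N hN g⁻¹ n) := by
    intro n
    rw [hT, ← mul_assoc, ← hscentral (ρ n), mul_assoc, hbase₀ n, ← mul_assoc]
  have key := intertwine_zpow hN ρ g T hbase
  have hSval : (S : V →ₗ[k] V) = μ • 1 := by
    apply LinearMap.ext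
    intro v
    rw [heig v, LinearMap.smul_apply, Module.End.one_apply]
  have hTmEq : T ^ m = ρ gm := by
    have hcomm : Commute s T₀ := hscentral T₀
    have h1 : T ^ m = s ^ m * T₀ ^ m := by rw [hT]; exact hcomm.mul_pow m
    have h2 : T₀ ^ m = ρ gm * S := by rw [hS, ← mul_assoc, mul_inv_cancel, one_mul]
    apply Units.ext
    rw [h1, h2]
    show ((s ^ m : LinearMap.GeneralLinearGroup k V) : V →ₗ[k] V)
        * (((ρ gm) * S : LinearMap.GeneralLinearGroup k V) : V →ₗ[k] V)
        = ((ρ gm : LinearMap.GeneralLinearGroup k V) : V →ₗ[k] V)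
    have hsm : ((s ^ m : LinearMap.GeneralLinearGroup k V) : V →ₗ[k] V) = μ⁻¹ • 1 := by
      rw [Units.val_pow_eq_pow_val]
      show (l • (1 : V →ₗ[k] V)) ^ m = μ⁻¹ • 1
      rw [smul_pow, one_pow, hl]
    rw [hsm, Units.val_mul, hSval]
    rw [mul_smul_comm, mul_one, smul_mul_assoc, one_mul, smul_smul,
      inv_mul_cancel₀ hμ0, one_smul]
  -- the exponent of an element of G with respect to the generator
  choose e he using fun x : G => Subgroup.mem_zpowers_iff.mp (hq (x : G ⧸ N))
  have hmem : ∀ x : G, (g ^ e x)⁻¹ * x ∈ N := by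
    intro x
    rw [← QuotientGroup.eq_one_iff]
    have h1 : (((g ^ e x)⁻¹ * x : G) : G ⧸ N) = (q ^ e x)⁻¹ * (x : G ⧸ N) := by
      simp only [QuotientGroup.mk_mul, QuotientGroup.mk_inv, QuotientGroup.mk_zpow, hg]
    rw [h1, he x, inv_mul_cancel]
  set f : G → LinearMap.GeneralLinearGroup k V :=
    fun x => T ^ e x * ρ ⟨(g ^ e x)⁻¹ * x, hmem x⟩ with hf
  have hwd : ∀ (x : G) (i : ℤ) (h : (g ^ i)⁻¹ * x ∈ N),
      f x = T ^ i * ρ ⟨(g ^ i)⁻¹ * x, h⟩ := by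
    intro x i h
    have hqi : q ^ i = (x : G ⧸ N) := by
      have h1 : (((g ^ i)⁻¹ * x : G) : G ⧸ N) = 1 := (QuotientGroup.eq_one_iff _).mpr h
      simp only [QuotientGroup.mk_mul, QuotientGroup.mk_inv, QuotientGroup.mk_zpow, hg] at h1
      rwa [inv_mul_eq_one] at h1
    have hdvd : ((m : ℕ) : ℤ) ∣ i - e x := by
      rw [← horder]
      exact orderOf_dvd_iff_zpow_eq_one.mpr
        (by rw [zpow_sub, hqi, he x, mul_inv_cancel])
    obtain ⟨t, ht⟩ := hdvd
    have hi : i = e x + (m : ℤ) * t := by omega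
    have hTi : T ^ i = T ^ e x * ρ (gm ^ t) := by
      rw [hi, zpow_add, zpow_mul, zpow_natCast, hTmEq, ← map_zpow]
    simp only [hf]
    rw [hTi, mul_assoc, ← map_mul]
    have harg : (⟨(g ^ e x)⁻¹ * x, hmem x⟩ : N) = gm ^ t * ⟨(g ^ i)⁻¹ * x, h⟩ := by
      apply Subtype.ext
      simp only [Subgroup.coe_mul]
      have hz : ((gm ^ t : N) : G) = g ^ ((m : ℤ) * t) := by
        rw [SubgroupClass.coe_zpow]
        show ((g ^ m : G)) ^ t = _
        rw [← zpow_natCast g m, ← zpow_mul]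
      rw [hz, hi]
      group
    rw [harg]
  have hmul : ∀ x y : G, f (x * y) = f x * f y := by
    intro x y
    set nx : N := ⟨(g ^ e x)⁻¹ * x, hmem x⟩ with hnx
    set ny : N := ⟨(g ^ e y)⁻¹ * y, hmem y⟩ with hny
    have hcoe : ((conjN N hN (g ^ e y)⁻¹ nx * ny : N) : G)
        = (g ^ (e x + e y))⁻¹ * (x * y) := by
      simp only [Subgroup.coe_mul, conjN_coe, hnx, hny]
      rw [zpow_add]
      group
    have hxy : (g ^ (e x + e y))⁻¹ * (x * y) ∈ N :=
      hcoe ▸ (conjN N hN (g ^ e y)⁻¹ nx * ny).2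
    rw [hwd (x * y) (e x + e y) hxy]
    have hrhs : f x * f y = T ^ (e x + e y) * ρ (conjN N hN (g ^ e y)⁻¹ nx * ny) := by
      show (T ^ e x * ρ nx) * (T ^ e y * ρ ny) = _
      rw [map_mul, zpow_add, mul_assoc, ← mul_assoc (ρ nx), key (e y) nx]
      simp only [mul_assoc]
    rw [hrhs]
    have harg : (⟨(g ^ (e x + e y))⁻¹ * (x * y), hxy⟩ : N)
        = conjN N hN (g ^ e y)⁻¹ nx * ny := Subtype.ext hcoe.symm
    rw [harg]
  refine ⟨MonoidHom.mk' f hmul, fun n => ?_⟩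
  have h0 : (g ^ (0 : ℤ))⁻¹ * (n : G) ∈ N := by simp [n.2]
  have hn : (⟨(g ^ (0 : ℤ))⁻¹ * (n : G), h0⟩ : N) = n := Subtype.ext (by simp)
  show f (n : G) = ρ n
  rw [hwd (n : G) 0 h0, hn, zpow_zero, one_mul]
end

section
/- Let θ₁,…,θ_n ∈ ℂ be pairwise distinct complex numbers and c₁,…,c_n ∈ ℂ. If the sequence m ↦ ∑_{k=1}^n c_k·θ_k^m (m ∈ ℕ) is bounded, then c_k = 0 for every index k with |θ_k| > 1. -/
/-- If the sequence `m ↦ ∑ cₖ θₖ^m` is bounded for pairwise distinct complex numbers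
`θₖ`, then `cₖ = 0` whenever `|θₖ| > 1`. -/
theorem coeff_eq_zero_of_bounded_powersum_of_abs_gt_one
    (n : ℕ) (θ c : Fin n → ℂ) (hθ : Function.Injective θ)
    (hbd : ∃ M : ℝ, ∀ m : ℕ, ‖∑ k : Fin n, c k * θ k ^ m‖ ≤ M) :
    ∀ k, 1 < ‖θ k‖ → c k = 0 := by
  obtain ⟨M, hM⟩ := hbd
  have hM0 : 0 ≤ M := le_trans (norm_nonneg _) (hM 0)
  intro k hk
  by_contra hc
  set P : Polynomial ℂ := ∏ j ∈ Finset.univ.erase k, (Polynomial.X - Polynomial.C (θ j))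
    with hP
  have hPk : P.eval (θ k) ≠ 0 := by
    rw [hP, Polynomial.eval_prod]
    refine Finset.prod_ne_zero_iff.2 fun j hj => ?_
    simp only [Polynomial.eval_sub, Polynomial.eval_X, Polynomial.eval_C, sub_ne_zero]
    exact fun h => (Finset.mem_erase.1 hj).1 (hθ h.symm)
  have hPj : ∀ j : Fin n, j ≠ k → P.eval (θ j) = 0 := by
    intro j hj
    rw [hP, Polynomial.eval_prod]
    refine Finset.prod_eq_zero (Finset.mem_erase.2 ⟨hj, Finset.mem_univ j⟩) ?_
    simp
  set d := P.natDegree + 1 with hd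
  have key : ∀ m : ℕ,
      ∑ i ∈ Finset.range d, P.coeff i * (∑ j : Fin n, c j * θ j ^ (m + i))
        = c k * P.eval (θ k) * θ k ^ m := by
    intro m
    have h1 : ∀ j : Fin n,
        ∑ i ∈ Finset.range d, P.coeff i * (c j * θ j ^ (m + i))
          = c j * θ j ^ m * P.eval (θ j) := by
      intro j
      rw [Polynomial.eval_eq_sum_range, Finset.mul_sum, ← hd]
      refine Finset.sum_congr rfl fun i _ => ?_
      rw [pow_add]; ring
    calc ∑ i ∈ Finset.range d, P.coeff i * (∑ j : Fin n, c j * θ j ^ (m + i))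
        = ∑ j : Fin n, ∑ i ∈ Finset.range d, P.coeff i * (c j * θ j ^ (m + i)) := by
          rw [Finset.sum_comm]
          exact Finset.sum_congr rfl fun i _ => by rw [Finset.mul_sum]
      _ = ∑ j : Fin n, c j * θ j ^ m * P.eval (θ j) := Finset.sum_congr rfl fun j _ => h1 j
      _ = c k * P.eval (θ k) * θ k ^ m := by
          rw [Finset.sum_eq_single k]
          · ring
          · intro j _ hj; rw [hPj j hj, mul_zero]
          · intro h; exact absurd (Finset.mem_univ k) h
  set M' : ℝ := ∑ i ∈ Finset.range d, norm (P.coeff i) * M with hM'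
  have hbd2 : ∀ m : ℕ,
      norm (c k * P.eval (θ k)) * norm (θ k) ^ m ≤ M' := by
    intro m
    have := key m
    calc norm (c k * P.eval (θ k)) * norm (θ k) ^ m
        = norm (c k * P.eval (θ k) * θ k ^ m) := by
          simp [map_mul, map_pow]
      _ = norm (∑ i ∈ Finset.range d,
            P.coeff i * (∑ j : Fin n, c j * θ j ^ (m + i))) := by rw [this]
      _ ≤ ∑ i ∈ Finset.range d,
            norm (P.coeff i * (∑ j : Fin n, c j * θ j ^ (m + i))) :=
          norm_sum_le _ _
      _ ≤ M' := by
          refine Finset.sum_le_sum fun i _ => ?_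
          rw [norm_mul]
          exact mul_le_mul_of_nonneg_left (hM (m + i)) (norm_nonneg _)
  have ha : 0 < norm (c k * P.eval (θ k)) := by
    rw [norm_mul]
    exact mul_pos (norm_pos_iff.2 hc) (norm_pos_iff.2 hPk)
  have htend : Filter.Tendsto (fun m : ℕ => norm (θ k) ^ m) Filter.atTop
      Filter.atTop := tendsto_pow_atTop_atTop_of_one_lt hk
  obtain ⟨m, hm⟩ := (htend.eventually_gt_atTop (M' / norm (c k * P.eval (θ k)))).exists
  have : M' < norm (c k * P.eval (θ k)) * norm (θ k) ^ m := by
    rw [div_lt_iff₀ ha] at hm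
    linarith [hm]
  exact absurd (hbd2 m) (not_le.2 this)
end
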